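/- Let n ≥ 2 and let G be the directed path v₁ → v₂ → ⋯ → v_n in which every edge has weight 1/(n+1), and fix every threshold θ_v = 2/(n+1). In the linear influence model with these fixed thresholds, the fractional influence vector x with x_{v₁} = 2/(n+1) and x_{v_i} = 1/(n+1) for 2 ≤ i ≤ n (so that ‖x‖₁ = 1) activates every vertex: the final activated set S_n^θ equals V. -/

import Mathlib

open Finset
open scoped Classical

/-- The final activated set of the (deterministic) linear influence process on a
weighted digraph with weights `wt`, thresholds `θ` and direct influences `x`:
starting from `∅`, a vertex `v` activates once the total weight of edges from the
active set into `v` plus `x v` reaches `θ v`; the process runs for `|W|` rounds. -/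
noncomputable def finalSet {W : Type*} [Fintype W] (wt : W → W → ℝ) (θ x : W → ℝ) :
    Finset W :=
  (fun S => S ∪ Finset.univ.filter (fun v => θ v ≤ (∑ u ∈ S, wt u v) + x v))^[Fintype.card W] ∅

/-- On the directed path `v₁ → ⋯ → v_n` with edge weights `1/(n+1)` and all fixed
thresholds `2/(n+1)`, the fractional influence vector giving `2/(n+1)` to `v₁` and
`1/(n+1)` to every other vertex has total budget `1` and activates every vertex. -/
theorem stmt5 (n : ℕ) (hn : 2 ≤ n) :
    let wt : Fin n → Fin n → ℝ := fun u v => if (u : ℕ) + 1 = (v : ℕ) then 1 / (n + 1) else 0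
    let θ : Fin n → ℝ := fun _ => 2 / (n + 1)
    let x : Fin n → ℝ := fun v => if (v : ℕ) = 0 then 2 / (n + 1) else 1 / (n + 1)
    (∑ v, x v) = 1 ∧ finalSet wt θ x = Finset.univ := by
  intro wt θ x
  constructor
  ·   have hne : ((n:ℝ) + 1) ≠ 0 := by positivity
      have hn0 : 0 < n := by omega
      have h0 : ∑ v : Fin n, x v = ∑ i ∈ Finset.range n,
          (if i = 0 then 2 / ((n:ℝ) + 1) else 1 / ((n:ℝ) + 1)) :=
        Fin.sum_univ_eq_sum_range (fun i => if i = 0 then 2 / ((n:ℝ) + 1) else 1 / ((n:ℝ) + 1)) n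
      rw [h0]
      have h1 : ∀ i ∈ Finset.range n, (if i = 0 then 2 / ((n:ℝ) + 1) else 1 / ((n:ℝ) + 1))
          = 1 / ((n:ℝ)+1) + (if i = 0 then 1 / ((n:ℝ)+1) else 0) := by
        intro i _; split <;> ring
      rw [Finset.sum_congr rfl h1, Finset.sum_add_distrib, Finset.sum_const,
        Finset.sum_ite_eq' (Finset.range n) 0 (fun _ => 1 / ((n:ℝ)+1)),
        if_pos (Finset.mem_range.mpr hn0), Finset.card_range]
      rw [nsmul_eq_mul]
      field_simp
  ·   have hpos : (0:ℝ) < 1 / ((n:ℝ) + 1) := by positivity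
      set F : Finset (Fin n) → Finset (Fin n) :=
        fun S => S ∪ Finset.univ.filter (fun v => θ v ≤ (∑ u ∈ S, wt u v) + x v) with hF
      have hwt_nonneg : ∀ u v : Fin n, 0 ≤ wt u v := by
        intro u v; simp only [wt]; split
        · positivity
        · exact le_refl 0
      have hsum_nonneg : ∀ (S : Finset (Fin n)) (v : Fin n), 0 ≤ ∑ u ∈ S, wt u v := by
        intro S v; exact Finset.sum_nonneg fun u _ => hwt_nonneg u v
      have main : ∀ k, ∀ i (hi : i < n), i < k → (⟨i, hi⟩ : Fin n) ∈ F^[k] ∅ := by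
        intro k
        induction k with
        | zero => intro i hi h; omega
        | succ k ih =>
          intro i hi hik
          rw [Function.iterate_succ_apply']
          by_cases h : i < k
          · exact Finset.mem_union_left _ (ih i hi h)
          · have hik' : i = k := by omega
            refine Finset.mem_union_right _ (Finset.mem_filter.mpr ⟨Finset.mem_univ _, ?_⟩)
            have hs := hsum_nonneg (F^[k] ∅) ⟨i, hi⟩
            rcases Nat.eq_zero_or_pos i with h0 | h0
            · have hx : x ⟨i, hi⟩ = 2 / ((n:ℝ) + 1) := by simp [x, h0]
              have hθ : θ ⟨i, hi⟩ = 2 / ((n:ℝ) + 1) := rfl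
              rw [hx, hθ]; linarith
            · have hp : (⟨i - 1, by omega⟩ : Fin n) ∈ F^[k] ∅ := ih (i-1) (by omega) (by omega)
              have hterm : wt ⟨i - 1, by omega⟩ ⟨i, hi⟩ = 1 / ((n:ℝ) + 1) := by
                simp only [wt]; rw [if_pos]; omega
              have hle : wt ⟨i - 1, by omega⟩ ⟨i, hi⟩ ≤ ∑ u ∈ F^[k] ∅, wt u ⟨i, hi⟩ :=
                Finset.single_le_sum (fun u _ => hwt_nonneg u _) hp
              have hx : x ⟨i, hi⟩ = 1 / ((n:ℝ) + 1) := by simp [x]; omega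
              have hθ : θ ⟨i, hi⟩ = 2 / ((n:ℝ) + 1) := rfl
              rw [hx, hθ]
              rw [hterm] at hle
              have : 2 / ((n:ℝ)+1) = 1/((n:ℝ)+1) + 1/((n:ℝ)+1) := by ring
              linarith
      have hfs : finalSet wt θ x = F^[Fintype.card (Fin n)] ∅ := by
        unfold finalSet
        suffices h : ∀ (f g : Finset (Fin n) → Finset (Fin n)), f = g →
            f^[Fintype.card (Fin n)] (∅ : Finset (Fin n)) = g^[Fintype.card (Fin n)] ∅ by
          apply h
          funext S
          ext v
          simp [hF, Finset.mem_union, Finset.mem_filter]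
        intro f g h; rw [h]
      rw [hfs, Finset.eq_univ_iff_forall]
      intro v
      have := main (Fintype.card (Fin n)) v.val v.isLt (by rw [Fintype.card_fin]; exact v.isLt)
      simpa using this
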